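/- Let M ≥ 3 and A ⊂ {0,...,M-1} with |A| ≥ 2 (so δ = log|A|/log M > 0). Then for every k ≥ 2, r_k = ‖1_{C_k} F_N 1_{C_k}‖ < N^{δ−1/2}, where N = M^k. -/

import Mathlib

open scoped Matrix

/-- The unitary discrete Fourier transform matrix
`(F_N)_{jℓ} = N^{-1/2} exp(-2πi jℓ/N)`. -/
noncomputable def dftMat (N : ℕ) : Matrix (Fin N) (Fin N) ℂ :=
  Matrix.of fun j ℓ => ((N : ℂ) ^ (-(1/2 : ℂ))) *
    Complex.exp (-2 * Real.pi * Complex.I * ((j : ℕ) : ℂ) * ((ℓ : ℕ) : ℂ) / (N : ℂ))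

open scoped Classical in
/-- The diagonal matrix of the coordinate projection onto indices in `S`. -/
noncomputable def projMat {N : ℕ} (S : Set ℕ) : Matrix (Fin N) (Fin N) ℂ :=
  Matrix.of fun j ℓ => if j = ℓ ∧ (j : ℕ) ∈ S then 1 else 0

/-- The discrete Cantor set: numbers all of whose base-`M` digits in positions `< k`
lie in the alphabet `A`. Restricted to `{0,…,M^k-1}` this is
`C_k = {a₀ + a₁M + ⋯ + a_{k-1}M^{k-1} : a_j ∈ A}`. -/
def cantorDigits (M k : ℕ) (A : Finset ℕ) : Set ℕ :=
  {n | ∀ i < k, (n / M ^ i) % M ∈ A}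

/-- The operator `1_{C_k} F_N 1_{C_k}` on `ℂ^N`, `N = M^k`, with the Euclidean norm. -/
noncomputable def cantorOp (M k : ℕ) (A : Finset ℕ) :
    EuclideanSpace ℂ (Fin (M ^ k)) →L[ℂ] EuclideanSpace ℂ (Fin (M ^ k)) :=
  LinearMap.toContinuousLinearMap
    (Matrix.toEuclideanLin
      (projMat (cantorDigits M k A) * dftMat (M ^ k) * projMat (cantorDigits M k A)))

/-- `r_k = ‖1_{C_k} F_N 1_{C_k}‖`, the operator norm on `ℂ^N`, `N = M^k`. -/
noncomputable def rk (M : ℕ) (A : Finset ℕ) (k : ℕ) : ℝ := ‖cantorOp M k A‖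

open Finset

section Generic

lemma rowCS {n : ℕ} (Mt : Matrix (Fin n) (Fin n) ℂ) (x : EuclideanSpace ℂ (Fin n)) :
    ‖Matrix.toEuclideanLin Mt x‖ ≤ Real.sqrt (∑ j, ∑ ℓ, ‖Mt j ℓ‖^2) * ‖x‖ := by
  set y : EuclideanSpace ℂ (Fin n) := Matrix.toEuclideanLin Mt x with hydef
  have hy : ∀ j, y j = ∑ ℓ, Mt j ℓ * x ℓ := by
    intro j
    simp [hydef, Matrix.toEuclideanLin_apply, Matrix.mulVec, dotProduct]
  have hx2 : ‖x‖^2 = ∑ ℓ, ‖x ℓ‖^2 := by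
    rw [EuclideanSpace.norm_eq, Real.sq_sqrt]
    exact Finset.sum_nonneg fun _ _ => sq_nonneg _
  have key : ∑ j, ‖y j‖^2 ≤ (∑ j, ∑ ℓ, ‖Mt j ℓ‖^2) * ‖x‖^2 := by
    rw [hx2, sum_mul]
    refine Finset.sum_le_sum fun j _ => ?_
    rw [hy]
    calc ‖∑ ℓ, Mt j ℓ * x ℓ‖^2 ≤ (∑ ℓ, ‖Mt j ℓ‖ * ‖x ℓ‖)^2 := by
          have h1 : ‖∑ ℓ, Mt j ℓ * x ℓ‖ ≤ ∑ ℓ, ‖Mt j ℓ‖ * ‖x ℓ‖ := by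
            refine (norm_sum_le _ _).trans ?_
            exact le_of_eq (Finset.sum_congr rfl fun ℓ _ => norm_mul _ _)
          exact pow_le_pow_left₀ (norm_nonneg _) h1 2
      _ ≤ (∑ ℓ, ‖Mt j ℓ‖^2) * ∑ ℓ, ‖x ℓ‖^2 := Finset.sum_mul_sq_le_sq_mul_sq _ _ _
  have hnorm : ‖y‖ = Real.sqrt (∑ j, ‖y j‖^2) := EuclideanSpace.norm_eq y
  rw [hnorm]
  have h2 : Real.sqrt (∑ j, ‖y j‖^2) ≤ Real.sqrt ((∑ j, ∑ ℓ, ‖Mt j ℓ‖^2) * ‖x‖^2) :=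
    Real.sqrt_le_sqrt key
  have h3 : Real.sqrt ((∑ j, ∑ ℓ, ‖Mt j ℓ‖^2) * ‖x‖^2)
      = Real.sqrt (∑ j, ∑ ℓ, ‖Mt j ℓ‖^2) * ‖x‖ := by
    rw [Real.sqrt_mul (Finset.sum_nonneg fun _ _ => Finset.sum_nonneg fun _ _ => sq_nonneg _),
      Real.sqrt_sq (norm_nonneg _)]
  exact h2.trans (le_of_eq h3)

lemma opBound {n : ℕ} (B : Matrix (Fin n) (Fin n) ℂ) :
    ‖LinearMap.toContinuousLinearMap (Matrix.toEuclideanLin B)‖ ≤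
    Real.sqrt (Real.sqrt (∑ j, ∑ ℓ, ‖(Bᴴ * B) j ℓ‖^2)) := by
  have hSG : (0:ℝ) ≤ ∑ j, ∑ ℓ, ‖(Bᴴ * B) j ℓ‖^2 :=
    Finset.sum_nonneg fun _ _ => Finset.sum_nonneg fun _ _ => sq_nonneg _
  refine ContinuousLinearMap.opNorm_le_bound _ (Real.sqrt_nonneg _) fun x => ?_
  have hcoe : (LinearMap.toContinuousLinearMap (Matrix.toEuclideanLin B)) x
      = Matrix.toEuclideanLin B x := rfl
  rw [hcoe]
  set y : EuclideanSpace ℂ (Fin n) := Matrix.toEuclideanLin B x with hy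
  have hG : Matrix.toEuclideanLin (Bᴴ * B) x = Matrix.toEuclideanLin Bᴴ y := by
    rw [hy]
    simp only [Matrix.toEuclideanLin_apply]
    congr 1
    rw [Matrix.mulVec_mulVec]
  have hadj : (inner ℂ y y) = inner ℂ x (Matrix.toEuclideanLin (Bᴴ * B) x) := by
    rw [hG, Matrix.toEuclideanLin_conjTranspose_eq_adjoint, LinearMap.adjoint_inner_right, hy]
  have h1 : ‖y‖^2 = RCLike.re (inner ℂ x (Matrix.toEuclideanLin (Bᴴ * B) x)) := by
    rw [← hadj, inner_self_eq_norm_sq]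
  have h2 : ‖y‖^2 ≤ Real.sqrt (∑ j, ∑ ℓ, ‖(Bᴴ * B) j ℓ‖^2) * ‖x‖^2 := by
    rw [h1]
    calc RCLike.re (inner ℂ x (Matrix.toEuclideanLin (Bᴴ * B) x))
        ≤ ‖x‖ * ‖Matrix.toEuclideanLin (Bᴴ * B) x‖ := re_inner_le_norm _ _
      _ ≤ ‖x‖ * (Real.sqrt (∑ j, ∑ ℓ, ‖(Bᴴ * B) j ℓ‖^2) * ‖x‖) :=
          mul_le_mul_of_nonneg_left (rowCS _ x) (norm_nonneg x)
      _ = Real.sqrt (∑ j, ∑ ℓ, ‖(Bᴴ * B) j ℓ‖^2) * ‖x‖^2 := by ring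
  have h3 : ‖y‖ = Real.sqrt (‖y‖^2) := (Real.sqrt_sq (norm_nonneg _)).symm
  rw [h3]
  calc Real.sqrt (‖y‖^2) ≤ Real.sqrt (Real.sqrt (∑ j, ∑ ℓ, ‖(Bᴴ * B) j ℓ‖^2) * ‖x‖^2) :=
        Real.sqrt_le_sqrt h2
    _ = Real.sqrt (Real.sqrt (∑ j, ∑ ℓ, ‖(Bᴴ * B) j ℓ‖^2)) * ‖x‖ := by
        rw [Real.sqrt_mul (Real.sqrt_nonneg _), Real.sqrt_sq (norm_nonneg _)]

end Generic

section Digits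

lemma addMulDigit0 {M a : ℕ} (m : ℕ) (ha : a < M) : (a + M * m) % M = a := by
  rw [Nat.add_mul_mod_self_left, Nat.mod_eq_of_lt ha]

lemma addMulDigitSucc {M : ℕ} (a m i : ℕ) (hM : 0 < M) (ha : a < M) :
    (a + M * m) / M ^ (i + 1) % M = m / M ^ i % M := by
  have h1 : (a + M * m) / M = m := by
    rw [Nat.add_mul_div_left _ _ hM, Nat.div_eq_of_lt ha, Nat.zero_add]
  have h2 : (a + M * m) / M ^ (i + 1) = (a + M * m) / M / M ^ i := by
    rw [Nat.div_div_eq_div_mul, ← pow_succ']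
  rw [h2, h1]

lemma addMulLt {M a m k : ℕ} (ha : a < M) (hm : m < M ^ k) :
    a + M * m < M ^ (k + 1) := by
  calc a + M * m < M + M * m := by omega
    _ = M * (m + 1) := by ring
    _ ≤ M * M ^ k := Nat.mul_le_mul_left _ hm
    _ = M ^ (k + 1) := (pow_succ' M k).symm

lemma constSumDigits {M a : ℕ} (ha : a < M) :
    ∀ k : ℕ, (∑ i ∈ Finset.range k, a * M ^ i) < M ^ k ∧
      ∀ i < k, ((∑ i ∈ Finset.range k, a * M ^ i) / M ^ i) % M = a := by
  have hM : 0 < M := lt_of_le_of_lt (Nat.zero_le a) ha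
  intro k
  induction k with
  | zero => simp
  | succ k ih =>
    have hsum : (∑ i ∈ Finset.range (k+1), a * M ^ i)
        = a + M * ∑ i ∈ Finset.range k, a * M ^ i := by
      rw [Finset.sum_range_succ']
      rw [Finset.mul_sum]
      simp only [pow_zero, mul_one]
      rw [Nat.add_comm]
      congr 1
      exact Finset.sum_congr rfl fun i _ => by ring
    rw [hsum]
    refine ⟨addMulLt ha ih.1, fun i hi => ?_⟩
    match i with
    | 0 => simp only [pow_zero, Nat.div_one]; exact addMulDigit0 _ ha
    | (i+1) =>
      rw [addMulDigitSucc a _ i hM ha]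
      exact ih.2 i (by omega)

open scoped Classical in
lemma cantorCard (M : ℕ) (hM : 0 < M) (A : Finset ℕ) (hAM : ∀ a ∈ A, a < M) :
    ∀ k : ℕ, ((Finset.range (M ^ k)).filter (fun n => n ∈ cantorDigits M k A)).card
      = A.card ^ k := by
  intro k
  induction k with
  | zero =>
    rw [pow_zero, pow_zero]
    rw [Finset.filter_true_of_mem (fun n _ => by simp [cantorDigits])]
    exact Finset.card_range 1
  | succ k ih =>
    rw [pow_succ, pow_succ, ← ih, ← Finset.card_product]
    refine Finset.card_nbij' (fun n => (n / M, n % M))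
      (fun p => p.2 + M * p.1) ?_ ?_ ?_ ?_
    · intro n hn
      rw [Finset.mem_coe, Finset.mem_filter, Finset.mem_range] at hn
      simp only [Finset.mem_filter, Finset.mem_range, cantorDigits, Set.mem_setOf_eq] at hn
      obtain ⟨hlt, hdig⟩ := hn
      rw [Finset.mem_coe, Finset.mem_product, Finset.mem_filter, Finset.mem_range]
      simp only [Finset.mem_product, Finset.mem_filter, Finset.mem_range, cantorDigits,
        Set.mem_setOf_eq]
      refine ⟨⟨?_, fun i hi => ?_⟩, ?_⟩
      · exact Nat.div_lt_of_lt_mul (by rw [mul_comm]; exact hlt)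
      · have h2 : n / M / M ^ i = n / M ^ (i+1) := by
          rw [Nat.div_div_eq_div_mul, ← pow_succ']
        rw [h2]
        exact hdig (i+1) (by omega)
      · have := hdig 0 (by omega)
        simpa using this
    · intro p hp
      rw [Finset.mem_coe, Finset.mem_product, Finset.mem_filter, Finset.mem_range] at hp
      simp only [Finset.mem_product, Finset.mem_filter, Finset.mem_range, cantorDigits,
        Set.mem_setOf_eq] at hp
      obtain ⟨⟨hp1, hp1d⟩, hp2⟩ := hp
      have ha : p.2 < M := hAM _ hp2
      rw [Finset.mem_coe, Finset.mem_filter, Finset.mem_range]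
      simp only [Finset.mem_filter, Finset.mem_range, cantorDigits, Set.mem_setOf_eq]
      constructor
      · have := addMulLt (k := k) ha hp1
        rwa [pow_succ] at this
      · intro i hi
        match i with
        | 0 => simp only [pow_zero, Nat.div_one]; rw [addMulDigit0 _ ha]; exact hp2
        | (j+1) =>
          rw [addMulDigitSucc _ _ j hM ha]
          exact hp1d j (by omega)
    · intro n hn
      simp only [Nat.mod_add_div]
    · intro p hp
      rw [Finset.mem_coe, Finset.mem_product, Finset.mem_filter, Finset.mem_range] at hp
      simp only [Finset.mem_product, Finset.mem_filter, Finset.mem_range, cantorDigits,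
        Set.mem_setOf_eq] at hp
      have ha : p.2 < M := hAM _ hp.2
      have h1 : (p.2 + M * p.1) / M = p.1 := by
        rw [Nat.add_mul_div_left _ _ hM, Nat.div_eq_of_lt ha, Nat.zero_add]
      have h2 : (p.2 + M * p.1) % M = p.2 := addMulDigit0 _ ha
      show ((p.2 + M * p.1) / M, (p.2 + M * p.1) % M) = p
      rw [h1, h2]

end Digits

section Trig

open Complex

lemma cosLtOne {x : ℝ} (h0 : 0 < x) (h2 : x < 2 * Real.pi) : Real.cos x < 1 := by
  refine lt_of_le_of_ne (Real.cos_le_one x) (fun he => ?_)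
  have hx0 : x = 0 :=
    (Real.cos_eq_one_iff_of_lt_of_lt (by linarith [Real.pi_pos]) h2).1 he
  linarith

lemma expIaddexpILt {α β : ℝ} (h : Real.cos (α - β) < 1) :
    ‖Complex.exp (↑α * I) + Complex.exp (↑β * I)‖ < 2 := by
  set z := Complex.exp (↑α * I) + Complex.exp (↑β * I) with hz
  have hre : z.re = Real.cos α + Real.cos β := by
    simp [hz, Complex.add_re, Complex.exp_ofReal_mul_I_re]
  have him : z.im = Real.sin α + Real.sin β := by
    simp [hz, Complex.add_im, Complex.exp_ofReal_mul_I_im]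
  have hsq : ‖z‖^2 = (Real.cos α + Real.cos β)^2 + (Real.sin α + Real.sin β)^2 := by
    rw [Complex.sq_norm, Complex.normSq_apply, hre, him]
    ring
  have h4 : ‖z‖^2 < 4 := by
    rw [hsq]
    nlinarith [Real.sin_sq_add_cos_sq α, Real.sin_sq_add_cos_sq β, Real.cos_sub α β, h]
  nlinarith [norm_nonneg z]

lemma starMulExp (u θ1 θ2 : ℝ) :
    (starRingEnd ℂ) (↑u * Complex.exp (↑θ1 * I)) * (↑u * Complex.exp (↑θ2 * I))
      = (↑(u^2) : ℂ) * Complex.exp (↑(θ2 - θ1) * I) := by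
  have hconj : (starRingEnd ℂ) (Complex.exp (↑θ1 * I)) = Complex.exp (↑θ1 * -I) := by
    rw [← Complex.exp_conj]
    congr 1
    rw [map_mul, Complex.conj_ofReal, Complex.conj_I]
  have harg : (↑(θ2 - θ1) : ℂ) * I = ↑θ2 * I + ↑θ1 * -I := by push_cast; ring
  rw [map_mul, Complex.conj_ofReal, hconj, harg, Complex.exp_add]
  push_cast
  ring

end Trig

section Entries

open scoped Classical

noncomputable def uu (M k : ℕ) : ℝ := ((M:ℝ)^k) ^ (-(1/2) : ℝ)

noncomputable def th (M k j ℓ : ℕ) : ℝ := (-2) * Real.pi * j * ℓ / ((M:ℝ)^k)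

noncomputable def Bmat (M k : ℕ) (A : Finset ℕ) : Matrix (Fin (M^k)) (Fin (M^k)) ℂ :=
  projMat (cantorDigits M k A) * dftMat (M ^ k) * projMat (cantorDigits M k A)

lemma projMat_diag {N : ℕ} (S : Set ℕ) :
    projMat (N := N) S
      = Matrix.diagonal (fun j : Fin N => if (j : ℕ) ∈ S then (1:ℂ) else 0) := by
  ext j ℓ
  by_cases h : j = ℓ
  · subst h
    simp [projMat, Matrix.diagonal_apply_eq]
  · simp [projMat, Matrix.diagonal_apply_ne _ h, h]

lemma uu_pos {M k : ℕ} (hM : 0 < M) : 0 < uu M k :=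
  Real.rpow_pos_of_pos (by positivity) _

lemma dft_entry {M k : ℕ} (hM : 0 < M) (j ℓ : Fin (M ^ k)) :
    dftMat (M ^ k) j ℓ
      = (↑(uu M k) : ℂ) * Complex.exp (↑(th M k j ℓ) * Complex.I) := by
  have hMk : ((M ^ k : ℕ) : ℂ) = (((M:ℝ)^k : ℝ) : ℂ) := by push_cast; ring
  have hMr : (0:ℝ) < (M:ℝ)^k := by positivity
  show ((M ^ k : ℕ) : ℂ) ^ (-(1/2 : ℂ)) *
      Complex.exp (-2 * Real.pi * Complex.I * ((j : ℕ) : ℂ) * ((ℓ : ℕ) : ℂ) / ((M ^ k : ℕ) : ℂ))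
    = (↑(uu M k) : ℂ) * Complex.exp (↑(th M k j ℓ) * Complex.I)
  congr 1
  · rw [hMk, uu, Complex.ofReal_cpow (le_of_lt hMr)]
    norm_num
  · congr 1
    rw [th]
    push_cast
    ring

lemma B_entry {M k : ℕ} (hM : 0 < M) (A : Finset ℕ) (j ℓ : Fin (M^k)) :
    Bmat M k A j ℓ
      = if ((j:ℕ) ∈ cantorDigits M k A ∧ (ℓ:ℕ) ∈ cantorDigits M k A)
          then (↑(uu M k) : ℂ) * Complex.exp (↑(th M k j ℓ) * Complex.I) else 0 := by
  rw [Bmat, projMat_diag, Matrix.mul_diagonal, Matrix.diagonal_mul, dft_entry hM]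
  by_cases hj : (j:ℕ) ∈ cantorDigits M k A
  · by_cases hl : (ℓ:ℕ) ∈ cantorDigits M k A
    · simp [hj, hl]
    · simp [hj, hl]
  · simp [hj]

lemma B_norm {M k : ℕ} (hM : 0 < M) (A : Finset ℕ) (j ℓ : Fin (M^k)) :
    ‖Bmat M k A j ℓ‖
      = if ((j:ℕ) ∈ cantorDigits M k A ∧ (ℓ:ℕ) ∈ cantorDigits M k A)
          then uu M k else 0 := by
  rw [B_entry hM]
  split_ifs with h
  · rw [norm_mul, Complex.norm_real, Real.norm_eq_abs,
      abs_of_pos (uu_pos hM), Complex.norm_exp_ofReal_mul_I, mul_one]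
  · exact norm_zero

lemma sumInd (M k : ℕ) (hM : 0 < M) (A : Finset ℕ) (hAM : ∀ a ∈ A, a < M) (c : ℝ) :
    (∑ m : Fin (M^k), (if (m:ℕ) ∈ cantorDigits M k A then c else 0))
      = ((A.card : ℝ))^k * c := by
  have h1 : (∑ m : Fin (M^k), (if (m:ℕ) ∈ cantorDigits M k A then c else 0))
      = ∑ i ∈ Finset.range (M^k), (if i ∈ cantorDigits M k A then c else 0) :=
    Fin.sum_univ_eq_sum_range (fun i => if i ∈ cantorDigits M k A then c else 0) (M^k)
  rw [h1, ← Finset.sum_filter, Finset.sum_const, cantorCard M hM A hAM k, nsmul_eq_mul]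
  push_cast
  ring

lemma G_le (M k : ℕ) (hM : 0 < M) (A : Finset ℕ) (hAM : ∀ a ∈ A, a < M)
    (j ℓ : Fin (M^k)) :
    ‖((Bmat M k A)ᴴ * Bmat M k A) j ℓ‖
      ≤ (if ((j:ℕ) ∈ cantorDigits M k A ∧ (ℓ:ℕ) ∈ cantorDigits M k A)
          then ((A.card : ℝ))^k * (uu M k)^2 else 0) := by
  have hGe : ((Bmat M k A)ᴴ * Bmat M k A) j ℓ
      = ∑ m, star (Bmat M k A m j) * Bmat M k A m ℓ := by
    rw [Matrix.mul_apply]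
    exact Finset.sum_congr rfl fun m _ => by rw [Matrix.conjTranspose_apply]
  rw [hGe]
  refine (norm_sum_le _ _).trans ?_
  have hterm : ∀ m : Fin (M^k), ‖star (Bmat M k A m j) * Bmat M k A m ℓ‖
      = (if ((m:ℕ) ∈ cantorDigits M k A ∧ (j:ℕ) ∈ cantorDigits M k A) then uu M k else 0)
        * (if ((m:ℕ) ∈ cantorDigits M k A ∧ (ℓ:ℕ) ∈ cantorDigits M k A) then uu M k else 0) := by
    intro m
    rw [norm_mul, norm_star, B_norm hM, B_norm hM]
  rw [Finset.sum_congr rfl fun m _ => hterm m]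
  by_cases hj : (j:ℕ) ∈ cantorDigits M k A
  · by_cases hl : (ℓ:ℕ) ∈ cantorDigits M k A
    · rw [if_pos ⟨hj, hl⟩]
      have hpt : ∀ m : Fin (M^k),
          (if ((m:ℕ) ∈ cantorDigits M k A ∧ (j:ℕ) ∈ cantorDigits M k A) then uu M k else 0)
            * (if ((m:ℕ) ∈ cantorDigits M k A ∧ (ℓ:ℕ) ∈ cantorDigits M k A) then uu M k else 0)
          = (if (m:ℕ) ∈ cantorDigits M k A then (uu M k)^2 else 0) := by
        intro m
        by_cases hm : (m:ℕ) ∈ cantorDigits M k A <;> simp [hm, hj, hl, pow_two]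
      rw [Finset.sum_congr rfl fun m _ => hpt m, sumInd M k hM A hAM]
    · rw [if_neg (fun h => hl h.2)]
      refine le_of_eq (Finset.sum_eq_zero fun m _ => ?_)
      simp [hl]
  · rw [if_neg (fun h => hj h.1)]
    refine le_of_eq (Finset.sum_eq_zero fun m _ => ?_)
    simp [hj]

end Entries
section Strict

open scoped Classical

lemma G_strict (M k : ℕ) (A : Finset ℕ) (hM : 3 ≤ M) (hk : 2 ≤ k)
    (hA2 : 2 ≤ A.card) (hAM : ∀ a ∈ A, a < M) :
    ∃ m0 m1 : Fin (M^k), (m0:ℕ) ∈ cantorDigits M k A ∧ (m1:ℕ) ∈ cantorDigits M k A ∧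
      ‖((Bmat M k A)ᴴ * Bmat M k A) m0 m1‖ < ((A.card : ℝ))^k * (uu M k)^2 := by
  have hM0 : 0 < M := by omega
  have hu : 0 < uu M k := uu_pos hM0
  have hNr : (0:ℝ) < (M:ℝ)^k := by positivity
  -- choose two distinct digits
  obtain ⟨a, haA, b, hbA, hab⟩ : ∃ a ∈ A, ∃ b ∈ A, a < b := by
    obtain ⟨x, hx, y, hy, hxy⟩ := Finset.one_lt_card.1 (by omega : 1 < A.card)
    rcases Nat.lt_or_ge x y with h | h
    · exact ⟨x, hx, y, hy, h⟩
    · exact ⟨y, hy, x, hx, by omega⟩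
  have haM := hAM a haA
  have hbM := hAM b hbA
  obtain ⟨ht1, ht2⟩ := constSumDigits haM (k-1)
  set t := ∑ i ∈ Finset.range (k-1), a * M ^ i with htdef
  have hkk : k - 1 + 1 = k := by omega
  have hj0N : a + M * t < M ^ k := by
    have := addMulLt haM ht1; rwa [hkk] at this
  have hj1N : b + M * t < M ^ k := by
    have := addMulLt hbM ht1; rwa [hkk] at this
  have hj0C : a + M * t ∈ cantorDigits M k A := by
    intro i hi
    match i with
    | 0 => simp only [pow_zero, Nat.div_one]; rw [addMulDigit0 _ haM]; exact haA
    | (i+1) =>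
      rw [addMulDigitSucc a t i hM0 haM, ht2 i (by omega)]
      exact haA
  have hj1C : b + M * t ∈ cantorDigits M k A := by
    intro i hi
    match i with
    | 0 => simp only [pow_zero, Nat.div_one]; rw [addMulDigit0 _ hbM]; exact hbA
    | (i+1) =>
      rw [addMulDigitSucc b t i hM0 hbM, ht2 i (by omega)]
      exact haA
  refine ⟨⟨a + M * t, hj0N⟩, ⟨b + M * t, hj1N⟩, hj0C, hj1C, ?_⟩
  set m0 : Fin (M^k) := ⟨a + M * t, hj0N⟩ with hm0def
  set m1 : Fin (M^k) := ⟨b + M * t, hj1N⟩ with hm1def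
  have h0C : (m0:ℕ) ∈ cantorDigits M k A := by rw [hm0def]; exact hj0C
  have h1C : (m1:ℕ) ∈ cantorDigits M k A := by rw [hm1def]; exact hj1C
  have hm01 : m1 ≠ m0 := by
    intro h
    have := congrArg Fin.val h
    simp [hm0def, hm1def] at this
    omega
  have hGe : ((Bmat M k A)ᴴ * Bmat M k A) m0 m1
      = ∑ m, star (Bmat M k A m m0) * Bmat M k A m m1 := by
    rw [Matrix.mul_apply]
    exact Finset.sum_congr rfl fun m _ => by rw [Matrix.conjTranspose_apply]
  rw [hGe]
  set f : Fin (M^k) → ℂ := fun m => star (Bmat M k A m m0) * Bmat M k A m m1 with hf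
  have hfn : ∀ m : Fin (M^k),
      ‖f m‖ = if (m:ℕ) ∈ cantorDigits M k A then (uu M k)^2 else 0 := by
    intro m
    rw [hf]
    simp only []
    rw [norm_mul, norm_star, B_norm hM0, B_norm hM0]
    by_cases hm : (m:ℕ) ∈ cantorDigits M k A <;> simp [hm, h0C, h1C, pow_two]
  have hfm0 : f m0 = (↑((uu M k)^2) : ℂ)
      * Complex.exp (↑(th M k (m0:ℕ) (m1:ℕ) - th M k (m0:ℕ) (m0:ℕ)) * Complex.I) := by
    rw [hf]
    simp only []
    rw [B_entry hM0, B_entry hM0, if_pos ⟨h0C, h0C⟩, if_pos ⟨h0C, h1C⟩,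
      ← starRingEnd_apply]
    exact starMulExp _ _ _
  have hfm1 : f m1 = (↑((uu M k)^2) : ℂ)
      * Complex.exp (↑(th M k (m1:ℕ) (m1:ℕ) - th M k (m1:ℕ) (m0:ℕ)) * Complex.I) := by
    rw [hf]
    simp only []
    rw [B_entry hM0, B_entry hM0, if_pos ⟨h1C, h0C⟩, if_pos ⟨h1C, h1C⟩,
      ← starRingEnd_apply]
    exact starMulExp _ _ _
  -- the two phases differ
  have hd2 : ((b:ℝ) - a)^2 < (M:ℝ)^k := by
    have hba : b - a < M := by omega
    have hnat : (b - a)^2 < M ^ k :=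
      lt_of_lt_of_le (Nat.pow_lt_pow_left hba two_ne_zero)
        (Nat.pow_le_pow_right (by omega) hk)
    have hcast : ((b:ℝ) - a) = ((b - a : ℕ) : ℝ) := by
      rw [Nat.cast_sub hab.le]
    rw [hcast]
    exact_mod_cast hnat
  have hba : (0:ℝ) < (b:ℝ) - a := by
    have : (a:ℝ) < b := by exact_mod_cast hab
    linarith
  have hαβ : (th M k (m1:ℕ) (m1:ℕ) - th M k (m1:ℕ) (m0:ℕ))
      - (th M k (m0:ℕ) (m1:ℕ) - th M k (m0:ℕ) (m0:ℕ))
      = -(2 * Real.pi * ((b:ℝ) - a)^2 / ((M:ℝ)^k)) := by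
    rw [hm0def, hm1def]
    simp only [th, Fin.val_mk]
    push_cast
    field_simp
    ring
  have hcos : Real.cos ((th M k (m1:ℕ) (m1:ℕ) - th M k (m1:ℕ) (m0:ℕ))
      - (th M k (m0:ℕ) (m1:ℕ) - th M k (m0:ℕ) (m0:ℕ))) < 1 := by
    rw [hαβ, Real.cos_neg]
    have hpi := Real.pi_pos
    refine cosLtOne ?_ ?_
    · apply div_pos _ hNr
      nlinarith [pow_pos hba 2]
    · rw [div_lt_iff₀ hNr]
      nlinarith [hd2]
  have hpair : ‖f m1 + f m0‖ < (uu M k)^2 + (uu M k)^2 := by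
    rw [hfm1, hfm0, ← mul_add, norm_mul, Complex.norm_real, Real.norm_eq_abs,
      abs_of_pos (pow_pos hu 2)]
    have h2 := expIaddexpILt hcos
    calc (uu M k)^2 * ‖_ + _‖ < (uu M k)^2 * 2 :=
          mul_lt_mul_of_pos_left h2 (pow_pos hu 2)
      _ = (uu M k)^2 + (uu M k)^2 := by ring
  have hm1mem : m1 ∈ Finset.univ.erase m0 :=
    Finset.mem_erase.2 ⟨hm01, Finset.mem_univ _⟩
  have hsplit : ∑ m, f m
      = (∑ m ∈ (Finset.univ.erase m0).erase m1, f m + f m1) + f m0 := by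
    rw [Finset.sum_erase_add _ _ hm1mem, Finset.sum_erase_add _ _ (Finset.mem_univ m0)]
  have hsplitn : (∑ m ∈ (Finset.univ.erase m0).erase m1, ‖f m‖ + ‖f m1‖) + ‖f m0‖
      = ((A.card : ℝ))^k * (uu M k)^2 := by
    rw [Finset.sum_erase_add _ _ hm1mem, Finset.sum_erase_add _ _ (Finset.mem_univ m0)]
    calc ∑ m, ‖f m‖
        = ∑ m : Fin (M^k), (if (m:ℕ) ∈ cantorDigits M k A then (uu M k)^2 else 0) :=
          Finset.sum_congr rfl fun m _ => hfn m
      _ = ((A.card : ℝ))^k * (uu M k)^2 := sumInd M k hM0 A hAM _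
  have hfn0 : ‖f m0‖ = (uu M k)^2 := by rw [hfn, if_pos h0C]
  have hfn1 : ‖f m1‖ = (uu M k)^2 := by rw [hfn, if_pos h1C]
  calc ‖∑ m, f m‖
      = ‖∑ m ∈ (Finset.univ.erase m0).erase m1, f m + (f m1 + f m0)‖ := by
        rw [hsplit, add_assoc]
    _ ≤ ‖∑ m ∈ (Finset.univ.erase m0).erase m1, f m‖ + ‖f m1 + f m0‖ := norm_add_le _ _
    _ ≤ (∑ m ∈ (Finset.univ.erase m0).erase m1, ‖f m‖) + ‖f m1 + f m0‖ := by
        have := norm_sum_le ((Finset.univ.erase m0).erase m1) f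
        linarith
    _ < ((A.card : ℝ))^k * (uu M k)^2 := by
        rw [hfn0, hfn1] at hsplitn
        linarith

end Strict

open scoped Classical in
/-- If `|A| ≥ 2` (so `δ > 0`), then for every `k ≥ 2`,
`r_k < N^{δ−1/2}` where `N = M^k` and `δ = log|A|/log M`. -/
theorem stmt10 (M : ℕ) (hM : 3 ≤ M) (A : Finset ℕ) (hA2 : 2 ≤ A.card)
    (hAM : ∀ a ∈ A, a < M) (k : ℕ) (hk : 2 ≤ k) :
    rk M A k < (((M : ℝ) ^ k) ^ (Real.log A.card / Real.log M - 1/2 : ℝ)) := by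
  have hM0 : 0 < M := by omega
  have hMk1 : (1:ℝ) < (M:ℝ) := by exact_mod_cast (by omega : 1 < M)
  have hu : 0 < uu M k := uu_pos hM0
  have hcA : (0:ℝ) < (A.card : ℝ) := by exact_mod_cast (by omega : 0 < A.card)
  have hcnt : (0:ℝ) < ((A.card : ℝ))^k := pow_pos hcA k
  have hNr : (0:ℝ) < (M:ℝ)^k := by positivity
  obtain ⟨m0, m1, h0C, h1C, hstrict⟩ := G_strict M k A hM hk hA2 hAM
  set G := (Bmat M k A)ᴴ * Bmat M k A with hG
  -- sum of squares bound
  have hSG : (∑ j : Fin (M^k), ∑ ℓ : Fin (M^k), ‖G j ℓ‖^2)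
      < (((A.card : ℝ))^k * uu M k)^4 := by
    have hbnd : ∀ j ℓ : Fin (M^k), ‖G j ℓ‖^2
        ≤ (if ((j:ℕ) ∈ cantorDigits M k A ∧ (ℓ:ℕ) ∈ cantorDigits M k A)
            then ((A.card : ℝ))^k * (uu M k)^2 else 0)^2 :=
      fun j ℓ => pow_le_pow_left₀ (norm_nonneg _) (G_le M k hM0 A hAM j ℓ) 2
    have hstep : (∑ j : Fin (M^k), ∑ ℓ : Fin (M^k), ‖G j ℓ‖^2)
        < ∑ j : Fin (M^k), ∑ ℓ : Fin (M^k),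
            (if ((j:ℕ) ∈ cantorDigits M k A ∧ (ℓ:ℕ) ∈ cantorDigits M k A)
              then ((A.card : ℝ))^k * (uu M k)^2 else 0)^2 := by
      refine Finset.sum_lt_sum (fun j _ => Finset.sum_le_sum fun ℓ _ => hbnd j ℓ)
        ⟨m0, Finset.mem_univ _, ?_⟩
      refine Finset.sum_lt_sum (fun ℓ _ => hbnd m0 ℓ) ⟨m1, Finset.mem_univ _, ?_⟩
      rw [if_pos ⟨h0C, h1C⟩]
      exact pow_lt_pow_left₀ hstrict (norm_nonneg _) two_ne_zero
    refine hstep.trans_le (le_of_eq ?_)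
    have hinner : ∀ j : Fin (M^k),
        (∑ ℓ : Fin (M^k), (if ((j:ℕ) ∈ cantorDigits M k A ∧ (ℓ:ℕ) ∈ cantorDigits M k A)
            then ((A.card : ℝ))^k * (uu M k)^2 else 0)^2)
        = (if (j:ℕ) ∈ cantorDigits M k A
            then ((A.card : ℝ))^k * (((A.card : ℝ))^k * (uu M k)^2)^2 else 0) := by
      intro j
      by_cases hj : (j:ℕ) ∈ cantorDigits M k A
      · rw [if_pos hj]
        have hpt : ∀ ℓ : Fin (M^k),
            (if ((j:ℕ) ∈ cantorDigits M k A ∧ (ℓ:ℕ) ∈ cantorDigits M k A)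
              then ((A.card : ℝ))^k * (uu M k)^2 else 0)^2
            = (if (ℓ:ℕ) ∈ cantorDigits M k A
              then (((A.card : ℝ))^k * (uu M k)^2)^2 else 0) := by
          intro ℓ
          by_cases hl : (ℓ:ℕ) ∈ cantorDigits M k A <;> simp [hj, hl]
        rw [Finset.sum_congr rfl fun ℓ _ => hpt ℓ, sumInd M k hM0 A hAM]
      · rw [if_neg hj]
        exact Finset.sum_eq_zero fun ℓ _ => by simp [hj]
    rw [Finset.sum_congr rfl fun j _ => hinner j, sumInd M k hM0 A hAM]
    ring
  -- operator norm bound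
  have hopn : rk M A k ≤ Real.sqrt (Real.sqrt (∑ j : Fin (M^k), ∑ ℓ : Fin (M^k), ‖G j ℓ‖^2)) := by
    have he : cantorOp M k A
        = LinearMap.toContinuousLinearMap (Matrix.toEuclideanLin (Bmat M k A)) := rfl
    rw [rk, he]
    exact opBound (Bmat M k A)
  -- identify the RHS
  have hRHS : (((M : ℝ) ^ k) ^ (Real.log A.card / Real.log M - 1/2 : ℝ))
      = ((A.card : ℝ))^k * uu M k := by
    have hlogM : Real.log M ≠ 0 := ne_of_gt (Real.log_pos hMk1)
    have h1 : (Real.log A.card / Real.log M - 1/2 : ℝ)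
        = Real.log A.card / Real.log M + (-(1/2)) := by ring
    rw [h1, Real.rpow_add hNr]
    have huu : ((M:ℝ)^k) ^ (-(1/2) : ℝ) = uu M k := rfl
    rw [huu]
    congr 1
    rw [← Real.rpow_natCast (M:ℝ) k, ← Real.rpow_natCast ((A.card:ℝ)) k,
        ← Real.rpow_mul (le_of_lt (lt_trans zero_lt_one hMk1))]
    rw [Real.rpow_def_of_pos (lt_trans zero_lt_one hMk1), Real.rpow_def_of_pos hcA]
    congr 1
    field_simp
  rw [hRHS]
  -- conclude via two square roots
  have hSGnn : (0:ℝ) ≤ ∑ j : Fin (M^k), ∑ ℓ : Fin (M^k), ‖G j ℓ‖^2 :=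
    Finset.sum_nonneg fun _ _ => Finset.sum_nonneg fun _ _ => sq_nonneg _
  have hcu : (0:ℝ) < ((A.card : ℝ))^k * uu M k := mul_pos hcnt hu
  have h2 : Real.sqrt (∑ j : Fin (M^k), ∑ ℓ : Fin (M^k), ‖G j ℓ‖^2)
      < (((A.card : ℝ))^k * uu M k)^2 := by
    have h := Real.sqrt_lt_sqrt hSGnn hSG
    rwa [show ((((A.card : ℝ))^k * uu M k)^4 : ℝ)
        = ((((A.card : ℝ))^k * uu M k)^2)^2 by ring,
      Real.sqrt_sq (sq_nonneg _)] at h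
  have h3 : Real.sqrt (Real.sqrt (∑ j : Fin (M^k), ∑ ℓ : Fin (M^k), ‖G j ℓ‖^2))
      < ((A.card : ℝ))^k * uu M k := by
    have h := Real.sqrt_lt_sqrt (Real.sqrt_nonneg _) h2
    rwa [Real.sqrt_sq hcu.le] at h
  exact lt_of_le_of_lt hopn h3
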